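/- Let Y be an integer-valued random variable with finite mean μ whose probability mass function is log-concave, and suppose μ ∈ ℤ. Then P(Y = μ)² ≤ 1/(1 + 2·Var(Y)). -/

import Mathlib

open Finset

/-- Chebyshev-type: for a nonincreasing sequence of slopes, the average of the
first `j` is at least the average of the first `n`. -/
lemma slope_avg {s : ℕ → ℝ} {n : ℕ} (hs : ∀ i j, i ≤ j → j + 1 ≤ n → s j ≤ s i)
    {j : ℕ} (hj : j ≤ n) :
    (j : ℝ) * (∑ i ∈ range n, s i) ≤ (n : ℝ) * (∑ i ∈ range j, s i) := by
  have key : ∀ i' ∈ Ico j n, (j : ℝ) * s i' ≤ ∑ i ∈ range j, s i := by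
    intro i' hi'
    rw [mem_Ico] at hi'
    calc (j:ℝ) * s i' = ∑ i ∈ range j, s i' := by
          rw [Finset.sum_const, card_range, nsmul_eq_mul]
      _ ≤ ∑ i ∈ range j, s i := by
          refine Finset.sum_le_sum fun i hi => ?_
          rw [mem_range] at hi
          exact hs i i' (le_of_lt (lt_of_lt_of_le hi hi'.1)) (by omega)
  have split : ∑ i ∈ range n, s i = ∑ i ∈ range j, s i + ∑ i ∈ Ico j n, s i := by
    rw [Finset.range_eq_Ico, ← Finset.sum_Ico_consecutive (f := s) (Nat.zero_le j) hj, Finset.range_eq_Ico]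
  have h2 : (j : ℝ) * ∑ i ∈ Ico j n, s i ≤ ((n : ℝ) - j) * ∑ i ∈ range j, s i := by
    calc (j : ℝ) * ∑ i ∈ Ico j n, s i = ∑ i' ∈ Ico j n, (j:ℝ) * s i' := by
          rw [Finset.mul_sum]
      _ ≤ ∑ i' ∈ Ico j n, ∑ i ∈ range j, s i := Finset.sum_le_sum key
      _ = ((n : ℝ) - j) * ∑ i ∈ range j, s i := by
          rw [Finset.sum_const, Nat.card_Ico, nsmul_eq_mul]
          congr 1
          have : (j:ℝ) ≤ n := by exact_mod_cast hj
          push_cast [Nat.cast_sub hj]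
          ring
  nlinarith [h2, split]

/-- One-sided geometric crossing lemma for log-concave sequences on ℕ. -/
lemma nat_cross {b : ℕ → ℝ} {n : ℕ} (hpos : ∀ i, i ≤ n → 0 < b i)
    (hlcb : ∀ i, i + 2 ≤ n → b i * b (i + 2) ≤ b (i + 1) ^ 2)
    {c r : ℝ} (hc : 0 < c) (hr : 0 < r)
    (h0 : c < b 0) (hn : c * r ^ n < b n) {j : ℕ} (hj : j ≤ n) :
    c * r ^ j < b j := by
  rcases Nat.eq_zero_or_pos j with rfl | hj0
  · simpa using h0
  rcases eq_or_lt_of_le hj with rfl | hjn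
  · exact hn
  -- now 0 < j < n
  set l : ℕ → ℝ := fun i => Real.log (b i) with hl
  set s : ℕ → ℝ := fun i => l (i + 1) - l i with hsdef
  have hslope : ∀ i j', i ≤ j' → j' + 1 ≤ n → s j' ≤ s i := by
    have step : ∀ i, i + 2 ≤ n → s (i + 1) ≤ s i := by
      intro i hi
      have h1 : 0 < b i := hpos i (by omega)
      have h2 : 0 < b (i+1) := hpos (i+1) (by omega)
      have h3 : 0 < b (i+2) := hpos (i+2) (by omega)
      have := hlcb i hi
      have hlog : Real.log (b i * b (i+2)) ≤ Real.log (b (i+1) ^ 2) :=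
        Real.log_le_log (by positivity) this
      rw [Real.log_mul (ne_of_gt h1) (ne_of_gt h3), Real.log_pow] at hlog
      simp only [hsdef, hl]
      push_cast at hlog ⊢
      nlinarith [hlog]
    have gen : ∀ d i, i + d + 1 ≤ n → s (i + d) ≤ s i := by
      intro d
      induction d with
      | zero => intro i _; simp
      | succ k ih =>
        intro i hi
        have h1 : s (i + k + 1) ≤ s (i + k) := step (i + k) (by omega)
        have h2 : s (i + k) ≤ s i := ih i (by omega)
        calc s (i + (k+1)) = s (i + k + 1) := by ring_nf
          _ ≤ s (i + k) := h1
          _ ≤ s i := h2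
    intro i j' hij hj'
    obtain ⟨d, rfl⟩ := Nat.exists_eq_add_of_le hij
    exact gen d i (by omega)
  have tele : ∀ m, m ≤ n → l m - l 0 = ∑ i ∈ range m, s i := by
    intro m _
    induction m with
    | zero => simp
    | succ k ih =>
      rw [Finset.sum_range_succ, ← ih (by omega)]
      simp only [hsdef]
      ring
  have hbj : 0 < b j := hpos j hj
  have hb0 : 0 < b 0 := hpos 0 (Nat.zero_le n)
  have hbn : 0 < b n := hpos n le_rfl
  have hl0 : Real.log c < l 0 := Real.log_lt_log hc h0
  have hln : Real.log c + (n : ℝ) * Real.log r < l n := by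
    have := Real.log_lt_log (by positivity) hn
    rwa [Real.log_mul (ne_of_gt hc) (by positivity), Real.log_pow] at this
  have havg := slope_avg hslope hj
  have hteln := tele n le_rfl
  have htelj := tele j hj
  have hnpos : (0:ℝ) < n := by exact_mod_cast (by omega : 0 < n)
  have hjpos : (0:ℝ) < j := by exact_mod_cast hj0
  have hnj : (0:ℝ) < (n:ℝ) - j := by
    have : (j:ℝ) < n := by exact_mod_cast hjn
    linarith
  -- n * l j > n * (log c + j * log r)
  have key : (n:ℝ) * (Real.log c + (j:ℝ) * Real.log r) < (n:ℝ) * l j := by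
    have h1 : (j:ℝ) * (l n - l 0) ≤ (n:ℝ) * (l j - l 0) := by
      rw [hteln, htelj] at *
      linarith [havg]
    nlinarith [mul_lt_mul_of_pos_left hln hjpos, mul_lt_mul_of_pos_left hl0 hnj]
  have hlj : Real.log c + (j:ℝ) * Real.log r < l j :=
    lt_of_mul_lt_mul_left key (le_of_lt hnpos) |>.trans_le (le_refl _)
  have : Real.log (c * r ^ j) < Real.log (b j) := by
    rwa [Real.log_mul (ne_of_gt hc) (by positivity), Real.log_pow]
  exact (Real.log_lt_log_iff (by positivity) hbj).mp this

/-- Right crossing lemma on ℤ. -/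
lemma int_cross_right {a : ℤ → ℝ}
    (hlc : ∀ k : ℤ, a (k - 1) * a (k + 1) ≤ a k ^ 2)
    (hsupp : ∀ j k l : ℤ, j ≤ k → k ≤ l → 0 < a j → 0 < a l → 0 < a k)
    {c r : ℝ} (hc : 0 < c) (hr : 0 < r)
    (h0 : c < a 0) {k : ℤ} (hk : 0 ≤ k) (hak : c * r ^ k.natAbs < a k)
    {j : ℤ} (h0j : 0 ≤ j) (hjk : j ≤ k) : c * r ^ j.natAbs < a j := by
  set n := k.natAbs with hn
  have hkn : (n : ℤ) = k := Int.natAbs_of_nonneg hk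
  have ha0 : 0 < a 0 := lt_trans hc h0
  have hakpos : 0 < a k := lt_trans (by positivity) hak
  have hpos : ∀ i : ℕ, i ≤ n → 0 < a (i : ℤ) := by
    intro i hi
    exact hsupp 0 i k (by exact_mod_cast Nat.zero_le i) (by omega) ha0 hakpos
  have hlcb : ∀ i : ℕ, i + 2 ≤ n → a (i : ℤ) * a ((i : ℤ) + 2) ≤ a ((i : ℤ) + 1) ^ 2 := by
    intro i _
    have := hlc ((i : ℤ) + 1)
    have e1 : (i : ℤ) + 1 - 1 = (i : ℤ) := by ring
    have e2 : (i : ℤ) + 1 + 1 = (i : ℤ) + 2 := by ring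
    rwa [e1, e2] at this
  have key := nat_cross (b := fun i : ℕ => a (i : ℤ)) (n := n) hpos
    (by intro i hi; have := hlcb i hi; push_cast; convert this using 3 <;> push_cast <;> ring)
    hc hr (by simpa using h0) (by show c * r ^ n < a ((n : ℕ) : ℤ); rw [hkn]; exact hak)
    (j := j.natAbs) (by omega)
  have hjn : ((j.natAbs : ℤ)) = j := Int.natAbs_of_nonneg h0j
  show c * r ^ j.natAbs < a j
  rw [← hjn]
  exact key

/-- Left crossing lemma on ℤ. -/
lemma int_cross_left {a : ℤ → ℝ}
    (hlc : ∀ k : ℤ, a (k - 1) * a (k + 1) ≤ a k ^ 2)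
    (hsupp : ∀ j k l : ℤ, j ≤ k → k ≤ l → 0 < a j → 0 < a l → 0 < a k)
    {c r : ℝ} (hc : 0 < c) (hr : 0 < r)
    (h0 : c < a 0) {k : ℤ} (hk : k ≤ 0) (hak : c * r ^ k.natAbs < a k)
    {j : ℤ} (h0j : k ≤ j) (hjk : j ≤ 0) : c * r ^ j.natAbs < a j := by
  have key := int_cross_right (a := fun i => a (-i))
    (by intro i
        have h := hlc (-i)
        show a (-(i - 1)) * a (-(i + 1)) ≤ a (-i) ^ 2
        have e1 : -(i - 1) = -i + 1 := by ring
        have e2 : -(i + 1) = -i - 1 := by ring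
        rw [e1, e2]
        nlinarith [h])
    (by intro j' k' l' h1 h2 hj' hl'
        exact hsupp (-l') (-k') (-j') (by omega) (by omega) hl' hj')
    hc hr (by simpa using h0) (k := -k) (by omega)
    (by show c * r ^ (-k).natAbs < a (- -k); rwa [Int.natAbs_neg, neg_neg]) (j := -j)
    (by omega) (by omega)
  have : a (- -j) = a j := by rw [neg_neg]
  rw [Int.natAbs_neg] at key
  calc c * r ^ j.natAbs < a (- -j) := key
    _ = a j := this

lemma hasSum_geom_lin {r : ℝ} (h0 : 0 ≤ r) (h1 : r < 1) :
    HasSum (fun n : ℕ => (n : ℝ) * r ^ n) (r / (1 - r) ^ 2) := by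
  have hnorm : ‖r‖ < 1 := by rw [Real.norm_eq_abs, abs_of_nonneg h0]; exact h1
  have hsummable : Summable (fun n : ℕ => (n : ℝ) * r ^ n) := by
    simpa using summable_pow_mul_geometric_of_norm_lt_one 1 hnorm
  exact hsummable.hasSum_iff.mpr (tsum_coe_mul_geometric_of_norm_lt_one hnorm)

lemma hasSum_geom_sq {r : ℝ} (h0 : 0 ≤ r) (h1 : r < 1) :
    HasSum (fun n : ℕ => (n : ℝ) ^ 2 * r ^ n) (r * (1 + r) / (1 - r) ^ 3) := by
  have hnorm : ‖r‖ < 1 := by rw [Real.norm_eq_abs, abs_of_nonneg h0]; exact h1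
  have S2 : Summable (fun n : ℕ => (n : ℝ) ^ 2 * r ^ n) :=
    summable_pow_mul_geometric_of_norm_lt_one 2 hnorm
  have S1 : Summable (fun n : ℕ => (n : ℝ) * r ^ n) := by
    simpa using summable_pow_mul_geometric_of_norm_lt_one 1 hnorm
  have S0 : Summable (fun n : ℕ => r ^ n) := summable_geometric_of_lt_one h0 h1
  set C := ∑' n : ℕ, (n : ℝ) ^ 2 * r ^ n with hC
  have hB : ∑' n : ℕ, (n : ℝ) * r ^ n = r / (1 - r) ^ 2 :=
    tsum_coe_mul_geometric_of_norm_lt_one hnorm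
  have hA : ∑' n : ℕ, r ^ n = (1 - r)⁻¹ := tsum_geometric_of_lt_one h0 h1
  have hshift : C = 0 + ∑' n : ℕ, ((n : ℝ) + 1) ^ 2 * r ^ (n + 1) := by
    rw [hC, Summable.tsum_eq_zero_add S2]
    push_cast
    simp
  have hexpand : (fun n : ℕ => ((n : ℝ) + 1) ^ 2 * r ^ (n + 1)) =
      fun n : ℕ => r * ((n : ℝ) ^ 2 * r ^ n) + (2 * r) * ((n : ℝ) * r ^ n) + r * r ^ n := by
    funext n
    ring
  have heq : C = r * C + (2 * r) * (r / (1 - r) ^ 2) + r * (1 - r)⁻¹ := by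
    nth_rewrite 1 [hshift]
    rw [zero_add, hexpand]
    rw [Summable.tsum_add (Summable.add (S2.mul_left r) (S1.mul_left (2 * r))) (S0.mul_left r),
      Summable.tsum_add (S2.mul_left r) (S1.mul_left (2 * r)), tsum_mul_left, tsum_mul_left,
      tsum_mul_left, hB, hA]
  have h1r : (1 : ℝ) - r ≠ 0 := by linarith
  have : C = r * (1 + r) / (1 - r) ^ 3 := by
    field_simp at heq ⊢
    nlinarith [heq]
  exact S2.hasSum_iff.mpr this


lemma natAbs_negsucc' (n : ℕ) : ((-((n : ℤ) + 1)).natAbs) = n + 1 := by omega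

lemma natAbs_cast' (n : ℕ) : (((n : ℤ)).natAbs) = n := by omega

section geomInt
variable {r : ℝ}

lemma hasSum_geomInt0 (g₀ : ℝ) (h0 : 0 ≤ r) (h1 : r < 1) :
    HasSum (fun k : ℤ => g₀ * r ^ k.natAbs) (g₀ * ((1 + r) / (1 - r))) := by
  have h1r : (1 : ℝ) - r ≠ 0 := by linarith
  have hpos := hasSum_geometric_of_lt_one h0 h1
  have hnat : HasSum (fun n : ℕ => g₀ * r ^ (((n : ℤ)).natAbs)) (g₀ * (1 - r)⁻¹) := by
    have e : (fun n : ℕ => g₀ * r ^ (((n : ℤ)).natAbs)) = fun n : ℕ => g₀ * r ^ n := by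
      funext n; rw [natAbs_cast']
    rw [e]; exact hpos.mul_left g₀
  have hneg : HasSum (fun n : ℕ => g₀ * r ^ ((-((n : ℤ) + 1)).natAbs)) (g₀ * r * (1 - r)⁻¹) := by
    have e : (fun n : ℕ => g₀ * r ^ ((-((n : ℤ) + 1)).natAbs)) =
        fun n : ℕ => (g₀ * r) * r ^ n := by
      funext n; rw [natAbs_negsucc', pow_succ]; ring
    rw [e]; exact hpos.mul_left (g₀ * r)
  have h := HasSum.of_nat_of_neg_add_one (f := fun k : ℤ => g₀ * r ^ k.natAbs) hnat hneg
  convert h using 1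
  field_simp

lemma hasSum_geomInt1 (g₀ : ℝ) (h0 : 0 ≤ r) (h1 : r < 1) :
    HasSum (fun k : ℤ => (k : ℝ) * (g₀ * r ^ k.natAbs)) 0 := by
  have hB := hasSum_geom_lin h0 h1
  have hnat : HasSum (fun n : ℕ => ((n : ℤ) : ℝ) * (g₀ * r ^ (((n : ℤ)).natAbs)))
      (g₀ * (r / (1 - r) ^ 2)) := by
    have e : (fun n : ℕ => ((n : ℤ) : ℝ) * (g₀ * r ^ (((n : ℤ)).natAbs))) =
        fun n : ℕ => g₀ * ((n : ℝ) * r ^ n) := by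
      funext n; rw [natAbs_cast']; push_cast; ring
    rw [e]; exact hB.mul_left g₀
  have hBshift : HasSum (fun n : ℕ => ((n : ℝ) + 1) * r ^ (n + 1)) (r / (1 - r) ^ 2) := by
    have := (hasSum_nat_add_iff (f := fun n : ℕ => (n : ℝ) * r ^ n) 1).mpr
      (by simpa using hB)
    simpa using this
  have hneg : HasSum (fun n : ℕ => ((-((n : ℤ) + 1) : ℤ) : ℝ) * (g₀ * r ^ ((-((n : ℤ) + 1)).natAbs)))
      (-(g₀ * (r / (1 - r) ^ 2))) := by
    have e : (fun n : ℕ => ((-((n : ℤ) + 1) : ℤ) : ℝ) * (g₀ * r ^ ((-((n : ℤ) + 1)).natAbs))) =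
        fun n : ℕ => (-g₀) * (((n : ℝ) + 1) * r ^ (n + 1)) := by
      funext n; rw [natAbs_negsucc']; push_cast; ring
    rw [e]
    have := hBshift.mul_left (-g₀)
    rw [show -(g₀ * (r / (1 - r) ^ 2)) = -g₀ * (r / (1 - r) ^ 2) by ring]; exact this
  have h := HasSum.of_nat_of_neg_add_one (f := fun k : ℤ => (k : ℝ) * (g₀ * r ^ k.natAbs))
    hnat hneg
  convert h using 1
  ring

lemma hasSum_geomInt2 (g₀ : ℝ) (h0 : 0 ≤ r) (h1 : r < 1) :
    HasSum (fun k : ℤ => (k : ℝ) ^ 2 * (g₀ * r ^ k.natAbs))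
      (2 * g₀ * (r * (1 + r) / (1 - r) ^ 3)) := by
  have hC := hasSum_geom_sq h0 h1
  have hnat : HasSum (fun n : ℕ => ((n : ℤ) : ℝ) ^ 2 * (g₀ * r ^ (((n : ℤ)).natAbs)))
      (g₀ * (r * (1 + r) / (1 - r) ^ 3)) := by
    have e : (fun n : ℕ => ((n : ℤ) : ℝ) ^ 2 * (g₀ * r ^ (((n : ℤ)).natAbs))) =
        fun n : ℕ => g₀ * ((n : ℝ) ^ 2 * r ^ n) := by
      funext n; rw [natAbs_cast']; push_cast; ring
    rw [e]; exact hC.mul_left g₀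
  have hCshift : HasSum (fun n : ℕ => ((n : ℝ) + 1) ^ 2 * r ^ (n + 1)) (r * (1 + r) / (1 - r) ^ 3) := by
    have := (hasSum_nat_add_iff (f := fun n : ℕ => (n : ℝ) ^ 2 * r ^ n) 1).mpr
      (by simpa using hC)
    simpa using this
  have hneg : HasSum
      (fun n : ℕ => ((-((n : ℤ) + 1) : ℤ) : ℝ) ^ 2 * (g₀ * r ^ ((-((n : ℤ) + 1)).natAbs)))
      (g₀ * (r * (1 + r) / (1 - r) ^ 3)) := by
    have e : (fun n : ℕ => ((-((n : ℤ) + 1) : ℤ) : ℝ) ^ 2 * (g₀ * r ^ ((-((n : ℤ) + 1)).natAbs))) =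
        fun n : ℕ => g₀ * (((n : ℝ) + 1) ^ 2 * r ^ (n + 1)) := by
      funext n; rw [natAbs_negsucc']; push_cast; ring
    rw [e]; exact hCshift.mul_left g₀
  have h := HasSum.of_nat_of_neg_add_one (f := fun k : ℤ => (k : ℝ) ^ 2 * (g₀ * r ^ k.natAbs))
    hnat hneg
  convert h using 1
  ring

end geomInt

set_option maxHeartbeats 1000000 in
theorem seq_main {a : ℤ → ℝ} (ha : ∀ k, 0 ≤ a k)
    (hlc : ∀ k : ℤ, a (k - 1) * a (k + 1) ≤ a k ^ 2)
    (hsupp : ∀ j k l : ℤ, j ≤ k → k ≤ l → 0 < a j → 0 < a l → 0 < a k)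
    {V : ℝ}
    (h0sum : HasSum a 1)
    (h1sum : HasSum (fun k : ℤ => (k : ℝ) * a k) 0)
    (h2sum : HasSum (fun k : ℤ => (k : ℝ) ^ 2 * a k) V) :
    (a 0) ^ 2 ≤ 1 / (1 + 2 * V) := by
  have hV0 : 0 ≤ V := by
    rw [← h2sum.tsum_eq]
    exact tsum_nonneg fun k => mul_nonneg (by positivity) (ha k)
  by_contra hcon
  push_neg at hcon
  have hpos12 : (0 : ℝ) < 1 + 2 * V := by linarith
  set s := Real.sqrt (1 + 2 * V) with hsdef
  have hs2 : s ^ 2 = 1 + 2 * V := Real.sq_sqrt (le_of_lt hpos12)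
  have hs0 : 0 < s := Real.sqrt_pos.mpr hpos12
  have hs1 : 1 ≤ s := by nlinarith
  have ha0 : 1 / s < a 0 := by
    by_contra h
    push_neg at h
    have h2 : a 0 ^ 2 ≤ (1 / s) ^ 2 := by
      have := ha 0
      nlinarith
    have : (1 / s) ^ 2 = 1 / (1 + 2 * V) := by
      rw [div_pow, one_pow, hs2]
    linarith
  rcases eq_or_lt_of_le hV0 with hVz | hVpos
  · -- V = 0 : a is a point mass at 0
    have hzero : ∀ k : ℤ, k ≠ 0 → a k = 0 := by
      intro k hk
      have hterm := Summable.le_tsum h2sum.summable k (fun j _ => mul_nonneg (by positivity) (ha j))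
      rw [h2sum.tsum_eq, ← hVz] at hterm
      have hk2 : (0:ℝ) < (k : ℝ) ^ 2 := by
        have : (k : ℝ) ≠ 0 := Int.cast_ne_zero.mpr hk
        positivity
      nlinarith [ha k]
    have h1 : a 0 = 1 := (hasSum_single 0 hzero).unique h0sum
    rw [h1, ← hVz] at hcon
    norm_num at hcon
  -- V > 0
  have hsgt1 : 1 < s := by nlinarith
  set r := (s - 1) / (s + 1) with hrdef
  have hr0 : 0 < r := div_pos (by linarith) (by linarith)
  have hr1 : r < 1 := (div_lt_one (by linarith)).mpr (by linarith)
  have h1mr : 1 - r = 2 / (s + 1) := by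
    rw [hrdef]; field_simp; ring
  have h1pr : 1 + r = 2 * s / (s + 1) := by
    rw [hrdef]; field_simp; ring
  set g₀ : ℝ := 1 / s with hg₀def
  have hg₀pos : 0 < g₀ := by positivity
  have e0 : g₀ * ((1 + r) / (1 - r)) = 1 := by
    rw [h1pr, h1mr, hg₀def]
    field_simp
  have e2 : 2 * g₀ * (r * (1 + r) / (1 - r) ^ 3) = V := by
    rw [h1pr, h1mr, hg₀def, hrdef]
    have hsne : s ≠ 0 := ne_of_gt hs0
    have hs1ne : s + 1 ≠ 0 := by positivity
    field_simp
    linear_combination hs2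
  have hgsum : HasSum (fun k : ℤ => g₀ * r ^ k.natAbs) 1 := e0 ▸ hasSum_geomInt0 g₀ hr0.le hr1
  have hgsum1 : HasSum (fun k : ℤ => (k : ℝ) * (g₀ * r ^ k.natAbs)) 0 :=
    hasSum_geomInt1 g₀ hr0.le hr1
  have hgsum2 : HasSum (fun k : ℤ => (k : ℝ) ^ 2 * (g₀ * r ^ k.natAbs)) V :=
    e2 ▸ hasSum_geomInt2 g₀ hr0.le hr1
  set d : ℤ → ℝ := fun k => a k - g₀ * r ^ k.natAbs with hddef
  have hd0sum : HasSum d 0 := by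
    have := h0sum.sub hgsum
    simpa using this
  have hd1sum : HasSum (fun k : ℤ => (k : ℝ) * d k) 0 := by
    have h := h1sum.sub hgsum1
    have e : (fun k : ℤ => (k : ℝ) * d k) =
        fun k : ℤ => (k : ℝ) * a k - (k : ℝ) * (g₀ * r ^ k.natAbs) := by
      funext k; simp only [hddef]; ring
    rw [e]; simpa using h
  have hd2sum : HasSum (fun k : ℤ => (k : ℝ) ^ 2 * d k) 0 := by
    have h := h2sum.sub hgsum2
    have e : (fun k : ℤ => (k : ℝ) ^ 2 * d k) =
        fun k : ℤ => (k : ℝ) ^ 2 * a k - (k : ℝ) ^ 2 * (g₀ * r ^ k.natAbs) := by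
      funext k; simp only [hddef]; ring
    rw [e]; simpa using h
  have hd0 : 0 < d 0 := by
    have : d 0 = a 0 - g₀ := by simp [hddef]
    rw [this]
    linarith [ha0]
  have hcrossR : ∀ {j k : ℤ}, 0 ≤ j → j ≤ k → 0 < d k → 0 < d j := by
    intro j k h0j hjk hdk
    simp only [hddef] at hdk ⊢
    rw [sub_pos] at hdk ⊢
    exact int_cross_right hlc hsupp hg₀pos hr0 (by simpa using (sub_pos.mp hd0)) (by omega) hdk
      h0j hjk
  have hcrossL : ∀ {j k : ℤ}, k ≤ j → j ≤ 0 → 0 < d k → 0 < d j := by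
    intro j k hkj hj0 hdk
    simp only [hddef] at hdk ⊢
    rw [sub_pos] at hdk ⊢
    exact int_cross_left hlc hsupp hg₀pos hr0 (by simpa using (sub_pos.mp hd0)) (by omega) hdk
      hkj hj0
  have key : ∀ f : ℤ → ℝ, HasSum f 0 → (∀ k, 0 ≤ f k) → 0 < f 0 → False := by
    intro f hf hnn hfpos
    have := Summable.le_tsum hf.summable 0 (fun j _ => hnn j)
    rw [hf.tsum_eq] at this
    linarith
  by_cases hR : ∀ k : ℤ, 0 ≤ k → 0 < d k
  · by_cases hL : ∀ k : ℤ, k ≤ 0 → 0 < d k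
    · -- d positive everywhere
      exact key d hd0sum
        (fun k => by rcases le_or_gt 0 k with h | h
                     exacts [le_of_lt (hR k h), le_of_lt (hL k (le_of_lt h))]) hd0
    · -- left threshold
      push_neg at hL
      obtain ⟨k₀, hk₀0, hk₀d⟩ := hL
      obtain ⟨u, ⟨hu0, hud⟩, humin⟩ := Int.exists_least_of_bdd
        (P := fun t : ℤ => 0 ≤ t ∧ d (-t) ≤ 0) ⟨0, fun z hz => hz.1⟩
        ⟨-k₀, by constructor <;> [omega; · rw [neg_neg]; linarith]⟩
      have hu1 : 1 ≤ u := by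
        rcases eq_or_lt_of_le hu0 with h | h
        · exfalso; rw [← h] at hud; simp at hud; linarith
        · omega
      have hLpos : ∀ k : ℤ, -u < k → k ≤ 0 → 0 < d k := by
        intro k h1 h2
        by_contra h
        push_neg at h
        have := humin (-k) ⟨by omega, by rwa [neg_neg]⟩
        omega
      have hLneg : ∀ k : ℤ, k ≤ -u → d k ≤ 0 := by
        intro k hk
        by_contra h
        push_neg at h
        have := hcrossL (j := -u) (k := k) (by omega) (by omega) h
        linarith [hud, this]
      -- test function k + u
      refine key (fun k => ((k : ℝ) + u) * d k) ?_ ?_ ?_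
      · have h := hd1sum.add (hd0sum.mul_left (u : ℝ))
        have e : (fun k : ℤ => ((k : ℝ) + u) * d k) =
            fun k : ℤ => (k : ℝ) * d k + (u : ℝ) * d k := by
          funext k; ring
        rw [e]; simpa using h
      · intro k
        rcases le_or_gt k (-u) with h | h
        · have h1 : ((k : ℝ) + u) ≤ 0 := by
            have : (k : ℝ) ≤ -u := by exact_mod_cast h
            linarith
          nlinarith [h1, hLneg k h]
        · have h1 : (0 : ℝ) < (k : ℝ) + u := by
            have : (-u : ℝ) < k := by exact_mod_cast h
            linarith
          have h2 : 0 < d k := by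
            rcases le_or_gt k 0 with h' | h'
            · exact hLpos k h h'
            · exact hR k (le_of_lt h')
          positivity
      · have : (0 : ℝ) < (u : ℝ) := by exact_mod_cast hu1
        simpa using by positivity
  · push_neg at hR
    obtain ⟨k₀, hk₀0, hk₀d⟩ := hR
    obtain ⟨t, ⟨ht0, htd⟩, htmin⟩ := Int.exists_least_of_bdd
      (P := fun t : ℤ => 0 ≤ t ∧ d t ≤ 0) ⟨0, fun z hz => hz.1⟩ ⟨k₀, hk₀0, by linarith⟩
    have ht1 : 1 ≤ t := by
      rcases eq_or_lt_of_le ht0 with h | h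
      · exfalso; rw [← h] at htd; linarith
      · omega
    have hRpos : ∀ k : ℤ, 0 ≤ k → k < t → 0 < d k := by
      intro k h1 h2
      by_contra h
      push_neg at h
      have := htmin k ⟨h1, h⟩
      omega
    have hRneg : ∀ k : ℤ, t ≤ k → d k ≤ 0 := by
      intro k hk
      by_contra h
      push_neg at h
      have := hcrossR (j := t) (k := k) ht0 hk h
      linarith
    by_cases hL : ∀ k : ℤ, k ≤ 0 → 0 < d k
    · -- only right threshold : test function t - k
      refine key (fun k => ((t : ℝ) - k) * d k) ?_ ?_ ?_
      · have h := (hd0sum.mul_left (t : ℝ)).sub hd1sum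
        have e : (fun k : ℤ => ((t : ℝ) - k) * d k) =
            fun k : ℤ => (t : ℝ) * d k - (k : ℝ) * d k := by
          funext k; ring
        rw [e]; simpa using h
      · intro k
        rcases lt_or_ge k t with h | h
        · have h1 : (0 : ℝ) < (t : ℝ) - k := by
            have : (k : ℝ) < t := by exact_mod_cast h
            linarith
          have h2 : 0 < d k := by
            rcases le_or_gt 0 k with h' | h'
            · exact hRpos k h' h
            · exact hL k (le_of_lt h')
          positivity
        · have h1 : ((t : ℝ) - k) ≤ 0 := by
            have : (t : ℝ) ≤ k := by exact_mod_cast h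
            linarith
          nlinarith [h1, hRneg k h]
      · have : (0 : ℝ) < (t : ℝ) := by exact_mod_cast ht1
        simpa using by positivity
    · -- both thresholds : test function (k + u) * (t - k)
      push_neg at hL
      obtain ⟨k₁, hk₁0, hk₁d⟩ := hL
      obtain ⟨u, ⟨hu0, hud⟩, humin⟩ := Int.exists_least_of_bdd
        (P := fun t : ℤ => 0 ≤ t ∧ d (-t) ≤ 0) ⟨0, fun z hz => hz.1⟩
        ⟨-k₁, by constructor <;> [omega; · rw [neg_neg]; linarith]⟩
      have hu1 : 1 ≤ u := by
        rcases eq_or_lt_of_le hu0 with h | h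
        · exfalso; rw [← h] at hud; simp at hud; linarith
        · omega
      have hLpos : ∀ k : ℤ, -u < k → k ≤ 0 → 0 < d k := by
        intro k h1 h2
        by_contra h
        push_neg at h
        have := humin (-k) ⟨by omega, by rwa [neg_neg]⟩
        omega
      have hLneg : ∀ k : ℤ, k ≤ -u → d k ≤ 0 := by
        intro k hk
        by_contra h
        push_neg at h
        have := hcrossL (j := -u) (k := k) (by omega) (by omega) h
        linarith [hud]
      refine key (fun k => ((k : ℝ) + u) * ((t : ℝ) - k) * d k) ?_ ?_ ?_
      · have h := ((hd2sum.neg).add (hd1sum.mul_left ((t : ℝ) - u))).add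
          (hd0sum.mul_left ((u : ℝ) * t))
        have e : (fun k : ℤ => ((k : ℝ) + u) * ((t : ℝ) - k) * d k) =
            fun k : ℤ => (-((k : ℝ) ^ 2 * d k) + ((t : ℝ) - u) * ((k : ℝ) * d k)) +
              ((u : ℝ) * t) * d k := by
          funext k; ring
        rw [e]; simpa using h
      · intro k
        rcases le_or_gt k (-u) with h | h
        · have h1 : ((k : ℝ) + u) ≤ 0 := by
            have : (k : ℝ) ≤ -u := by exact_mod_cast h
            linarith
          have h2 : (0 : ℝ) < (t : ℝ) - k := by
            have hkr : (k : ℝ) ≤ (-u : ℤ) := by exact_mod_cast h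
            have hur : (1 : ℝ) ≤ (u : ℝ) := by exact_mod_cast hu1
            have htr : (1 : ℝ) ≤ (t : ℝ) := by exact_mod_cast ht1
            push_cast at hkr
            linarith
          have h3 := hLneg k h
          nlinarith [mul_nonneg (mul_nonneg (neg_nonneg.mpr h1) (le_of_lt h2))
            (neg_nonneg.mpr h3)]
        · rcases lt_or_ge k t with h' | h'
          · have h1 : (0 : ℝ) < (k : ℝ) + u := by
              have : (-u : ℝ) < k := by exact_mod_cast h
              linarith
            have h2 : (0 : ℝ) < (t : ℝ) - k := by
              have : (k : ℝ) < t := by exact_mod_cast h'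
              linarith
            have h3 : 0 < d k := by
              rcases le_or_gt 0 k with h'' | h''
              · exact hRpos k h'' h'
              · exact hLpos k h (le_of_lt h'')
            positivity
          · have h1 : (0 : ℝ) < (k : ℝ) + u := by
              have htr : (t : ℝ) ≤ k := by exact_mod_cast h'
              have htr1 : (1 : ℝ) ≤ (t : ℝ) := by exact_mod_cast ht1
              have hur : (0 : ℝ) ≤ (u : ℝ) := by exact_mod_cast hu0
              linarith
            have h2 : ((t : ℝ) - k) ≤ 0 := by
              have : (t : ℝ) ≤ k := by exact_mod_cast h'
              linarith
            have h3 := hRneg k h'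
            nlinarith [mul_nonneg (mul_nonneg (le_of_lt h1) (neg_nonneg.mpr h2))
              (neg_nonneg.mpr h3)]
      · have hu : (0 : ℝ) < (u : ℝ) := by exact_mod_cast hu1
        have ht : (0 : ℝ) < (t : ℝ) := by exact_mod_cast ht1
        simpa using by positivity

open MeasureTheory ProbabilityTheory Set

lemma hasSum_integral_countable {μ : Measure ℤ} [IsFiniteMeasure μ] {f : ℤ → ℝ}
    (hf : Integrable f μ) :
    HasSum (fun k => f k * (μ {k}).toReal) (∫ x, f x ∂μ) := by
  have hint := integral_countable' hf
  have hlint : (∫⁻ a, ‖f a‖₊ ∂μ) < ⊤ := hf.2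
  rw [lintegral_countable'] at hlint
  have hsummable' : Summable (fun a : ℤ => ((‖f a‖₊ : ENNReal) * μ {a}).toReal) :=
    ENNReal.summable_toReal (ne_of_lt hlint)
  have hnorm : Summable (fun a : ℤ => ‖(μ {a}).toReal • f a‖) := by
    have e : (fun a : ℤ => ‖(μ {a}).toReal • f a‖) =
        fun a : ℤ => ((‖f a‖₊ : ENNReal) * μ {a}).toReal := by
      funext a
      rw [ENNReal.toReal_mul, norm_smul, Real.norm_eq_abs,
        abs_of_nonneg ENNReal.toReal_nonneg]
      simp [mul_comm]
    rw [e]; exact hsummable'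
  have hsummable : Summable (fun a : ℤ => (μ {a}).toReal • f a) := hnorm.of_norm
  have h := hsummable.hasSum_iff.mpr hint.symm
  have e : (fun k : ℤ => f k * (μ {k}).toReal) = fun k : ℤ => (μ {k}).toReal • f k := by
    funext k; rw [smul_eq_mul, mul_comm]
  rw [e]; exact h

theorem discrete_logConcave_prob_at_integer_mean_sq_le
    {Ω : Type*} [MeasurableSpace Ω] (P : Measure Ω) [IsProbabilityMeasure P]
    (Y : Ω → ℤ) (hY : Measurable Y)
    (hlc : ∀ k : ℤ, (P (Y ⁻¹' {k - 1})).toReal * (P (Y ⁻¹' {k + 1})).toReal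
      ≤ (P (Y ⁻¹' {k})).toReal ^ 2)
    (hsupp : ∀ j k l : ℤ, j ≤ k → k ≤ l →
      0 < P (Y ⁻¹' {j}) → 0 < P (Y ⁻¹' {l}) → 0 < P (Y ⁻¹' {k}))
    (hint : Integrable (fun ω => (Y ω : ℝ)) P)
    (m : ℤ) (hm : (∫ ω, (Y ω : ℝ) ∂P) = (m : ℝ)) :
    (P (Y ⁻¹' {m})).toReal ^ 2 ≤ 1 / (1 + 2 * variance (fun ω => (Y ω : ℝ)) P) := by
  have hcastm : Measurable (fun n : ℤ => (n : ℝ)) := by measurability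
  have hXm : Measurable (fun ω => (Y ω : ℝ)) := hcastm.comp hY
  have hLE1 : (P (Y ⁻¹' {m})).toReal ≤ 1 := by
    have h1 : P (Y ⁻¹' {m}) ≤ 1 := prob_le_one
    calc (P (Y ⁻¹' {m})).toReal ≤ (1 : ENNReal).toReal :=
          ENNReal.toReal_mono ENNReal.one_ne_top h1
      _ = 1 := ENNReal.toReal_one
  by_cases hL2 : MemLp (fun ω => (Y ω : ℝ)) 2 P
  swap
  · -- not square integrable : variance = 0 and the bound is trivial
    have hevar : evariance (fun ω => (Y ω : ℝ)) P = ⊤ :=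
      evariance_eq_top hXm.aestronglyMeasurable hL2
    have hvar : variance (fun ω => (Y ω : ℝ)) P = 0 := by
      rw [variance, hevar]; rfl
    rw [hvar]
    have e : 1 / (1 + 2 * (0:ℝ)) = 1 := by norm_num
    rw [e]
    exact pow_le_one₀ ENNReal.toReal_nonneg hLE1
  -- main case
  set μ : Measure ℤ := P.map Y with hμdef
  haveI : IsProbabilityMeasure μ := Measure.isProbabilityMeasure_map hY.aemeasurable
  have hfib : ∀ k : ℤ, μ {k} = P (Y ⁻¹' {k}) := fun k =>
    Measure.map_apply hY (measurableSet_singleton k)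
  set p : ℤ → ℝ := fun k => (P (Y ⁻¹' {k})).toReal with hpdef
  have hpμ : ∀ k : ℤ, (μ {k}).toReal = p k := fun k => by rw [hfib k]
  -- mass 1
  have hsum0 : HasSum p 1 := by
    have h := hasSum_integral_countable (μ := μ) (f := fun _ => (1 : ℝ))
      (integrable_const 1)
    simp only [one_mul] at h
    rw [integral_const] at h
    simp only [probReal_univ, measure_univ, ENNReal.toReal_one, one_smul, smul_eq_mul, mul_one] at h
    have e : (fun k : ℤ => (μ {k}).toReal) = p := by funext k; exact hpμ k
    rwa [e] at h
  -- first moment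
  have hcast_int : Integrable (fun x : ℤ => (x : ℝ)) μ := by
    rw [hμdef]
    exact (integrable_map_measure hcastm.aestronglyMeasurable hY.aemeasurable).mpr hint
  have hsum1 : HasSum (fun k : ℤ => (k : ℝ) * p k) (m : ℝ) := by
    have h := hasSum_integral_countable hcast_int
    have hval : (∫ x : ℤ, (x : ℝ) ∂μ) = (m : ℝ) := by
      rw [hμdef, integral_map hY.aemeasurable hcastm.aestronglyMeasurable]
      exact hm
    rw [hval] at h
    have e : (fun k : ℤ => (k : ℝ) * (μ {k}).toReal) = fun k : ℤ => (k : ℝ) * p k := by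
      funext k; rw [hpμ k]
    rwa [e] at h
  -- second moment
  have hcastL2 : MemLp (fun x : ℤ => (x : ℝ)) 2 μ := by
    rw [hμdef]
    exact (memLp_map_measure_iff hcastm.aestronglyMeasurable hY.aemeasurable).mpr hL2
  have hsq_int : Integrable (fun x : ℤ => ((x : ℝ) - m) ^ 2) μ :=
    (hcastL2.sub (memLp_const (m : ℝ))).integrable_sq
  set V : ℝ := variance (fun ω => (Y ω : ℝ)) P with hVdef
  have hvar_eq : V = ∫ ω, ((Y ω : ℝ) - m) ^ 2 ∂P := by
    rw [hVdef, variance_eq_integral hXm.aemeasurable]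
    congr 1
    funext ω
    simp only [Pi.pow_apply, Pi.sub_apply, hm]
  have hsum2 : HasSum (fun k : ℤ => ((k : ℝ) - m) ^ 2 * p k) V := by
    have h := hasSum_integral_countable hsq_int
    have hval : (∫ x : ℤ, ((x : ℝ) - m) ^ 2 ∂μ) = V := by
      rw [hμdef, integral_map (f := fun x : ℤ => ((x : ℝ) - m) ^ 2) hY.aemeasurable
        (((hcastm.sub measurable_const).pow_const 2).aestronglyMeasurable)]
      rw [hvar_eq]
    rw [hval] at h
    have e : (fun k : ℤ => ((k : ℝ) - m) ^ 2 * (μ {k}).toReal) =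
        fun k : ℤ => ((k : ℝ) - m) ^ 2 * p k := by
      funext k; rw [hpμ k]
    rwa [e] at h
  -- recenter
  set a : ℤ → ℝ := fun k => p (m + k) with hadef
  have ha0sum : HasSum a 1 := by
    have := (Equiv.addLeft m).hasSum_iff.mpr hsum0
    simpa [Function.comp_def, hadef] using this
  have ha1sum : HasSum (fun k : ℤ => (k : ℝ) * a k) 0 := by
    have hcentered : HasSum (fun j : ℤ => ((j : ℝ) - m) * p j) 0 := by
      have h := hsum1.sub (hsum0.mul_left (m : ℝ))
      have e : (fun j : ℤ => ((j : ℝ) - m) * p j) =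
          fun j : ℤ => (j : ℝ) * p j - (m : ℝ) * p j := by
        funext j; ring
      rw [e]; simpa using h
    have := (Equiv.addLeft m).hasSum_iff.mpr hcentered
    have e : ((fun j : ℤ => ((j : ℝ) - m) * p j) ∘ (Equiv.addLeft m)) =
        fun k : ℤ => (k : ℝ) * a k := by
      funext k
      simp only [Function.comp_apply, Equiv.coe_addLeft, hadef]
      push_cast
      ring_nf
    rwa [e] at this
  have ha2sum : HasSum (fun k : ℤ => (k : ℝ) ^ 2 * a k) V := by
    have := (Equiv.addLeft m).hasSum_iff.mpr hsum2
    have e : ((fun j : ℤ => ((j : ℝ) - m) ^ 2 * p j) ∘ (Equiv.addLeft m)) =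
        fun k : ℤ => (k : ℝ) ^ 2 * a k := by
      funext k
      simp only [Function.comp_apply, Equiv.coe_addLeft, hadef]
      push_cast
      ring_nf
    rwa [e] at this
  have hanonneg : ∀ k : ℤ, 0 ≤ a k := fun k => ENNReal.toReal_nonneg
  have halc : ∀ k : ℤ, a (k - 1) * a (k + 1) ≤ a k ^ 2 := by
    intro k
    have h := hlc (m + k)
    have e1 : m + (k - 1) = m + k - 1 := by ring
    have e2 : m + (k + 1) = m + k + 1 := by ring
    simp only [hadef, hpdef, e1, e2]
    exact h
  have hasupp : ∀ j k l : ℤ, j ≤ k → k ≤ l → 0 < a j → 0 < a l → 0 < a k := by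
    intro j k l hjk hkl hj hl
    simp only [hadef, hpdef] at hj hl ⊢
    have hj' : 0 < P (Y ⁻¹' {m + j}) :=
      (ENNReal.toReal_pos_iff.mp hj).1
    have hl' : 0 < P (Y ⁻¹' {m + l}) :=
      (ENNReal.toReal_pos_iff.mp hl).1
    have hk' := hsupp (m + j) (m + k) (m + l) (by omega) (by omega) hj' hl'
    exact ENNReal.toReal_pos (ne_of_gt hk') (measure_ne_top P _)
  have hmain := seq_main hanonneg halc hasupp ha0sum ha1sum ha2sum
  have ha0 : a 0 = (P (Y ⁻¹' {m})).toReal := by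
    simp only [hadef, hpdef, add_zero]
  rw [ha0] at hmain
  exact hmain
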